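/- Let s > 0, let α ≥ 2 be an even natural number, let g(y) = y / (1 + (y/s)^α) be the Rapp function, let d ≥ 1, and let {(x⁽ⁱ⁾, t⁽ⁱ⁾)}_{i=1}^D be a data set of D pairwise distinct observation vectors x⁽ⁱ⁾ ∈ ℝ^d with targets t⁽ⁱ⁾ ∈ ℝ, and augmented vectors x̃⁽ⁱ⁾ = (x⁽ⁱ⁾, 1) ∈ ℝ^{d+1}. Then for every ε > 0 there exists a number of hidden nodes N_r ≤ D such that, for almost every realization of a random matrix H ∈ ℝ^{N_r × (d+1)} with independent standard Gaussian entries, there exists a weight vector w ∈ ℝ^{N_r} with ‖G·w − t‖ < ε, where G ∈ ℝ^{D × N_r} has entries G_{i,j} = g(⟨H_{j,·}, x̃⁽ⁱ⁾⟩), t = (t⁽¹⁾, …, t⁽ᴰ⁾) ∈ ℝ^D, and ‖·‖ is the Euclidean norm on ℝ^D. -/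

import Mathlib

open MeasureTheory ProbabilityTheory

lemma gauss_finite_null {A : Set ℝ} (hA : A.Finite) : gaussianReal 0 1 A = 0 :=
  gaussianReal_absolutelyContinuous 0 one_ne_zero (hA.measure_zero volume)

lemma measurableSet_mveval_zero {σ : Type*} [Fintype σ] (P : MvPolynomial σ ℝ) :
    MeasurableSet {x : σ → ℝ | MvPolynomial.eval x P = 0} :=
  (MvPolynomial.continuous_eval (p := P)).measurable (measurableSet_singleton 0)

theorem zs1 : ∀ (n : ℕ) (P : MvPolynomial (Fin n) ℝ), P ≠ 0 →
    (Measure.pi fun _ : Fin n => gaussianReal 0 1) {x | MvPolynomial.eval x P = 0} = 0 := by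
  intro n
  induction n with
  | zero =>
    intro P hP
    obtain ⟨a, rfl⟩ := MvPolynomial.C_surjective (Fin 0) P
    have ha : a ≠ 0 := fun h => hP (by rw [h, map_zero])
    have hset : {x : Fin 0 → ℝ | MvPolynomial.eval x (MvPolynomial.C a) = 0} = ∅ := by
      ext x; simp [ha]
    rw [hset]; exact measure_empty
  | succ n IH =>
    intro P hP
    have hQ0 : MvPolynomial.finSuccEquiv ℝ n P ≠ 0 := by
      intro h
      apply hP
      have h2 := congrArg (MvPolynomial.finSuccEquiv ℝ n).symm h
      simpa using h2
    set Q : Polynomial (MvPolynomial (Fin n) ℝ) := MvPolynomial.finSuccEquiv ℝ n P with hQdef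
    have hQ : Q ≠ 0 := hQ0
    have hlc : Q.leadingCoeff ≠ 0 := Polynomial.leadingCoeff_ne_zero.mpr hQ
    set Z : Set (Fin (n+1) → ℝ) := {x | MvPolynomial.eval x P = 0} with hZdef
    have hZm : MeasurableSet Z := measurableSet_mveval_zero P
    have mp := measurePreserving_piFinSuccAbove (fun _ : Fin (n+1) => gaussianReal 0 1) 0
    set e := MeasurableEquiv.piFinSuccAbove (fun _ : Fin (n+1) => ℝ) 0 with hedef
    have hsymm : ∀ p : ℝ × (Fin n → ℝ), e.symm p = Fin.cons p.1 p.2 := by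
      intro p
      simp [hedef, MeasurableEquiv.piFinSuccAbove, Fin.insertNth_zero', Fin.consEquiv]
    have hT : e.symm ⁻¹' Z = {p : ℝ × (Fin n → ℝ) |
        Polynomial.eval p.1 (Polynomial.map (MvPolynomial.eval p.2) Q) = 0} := by
      ext p
      simp only [Set.mem_preimage, hZdef, Set.mem_setOf_eq, hsymm p]
      rw [MvPolynomial.eval_eq_eval_mv_eval']
    have hTm : MeasurableSet (e.symm ⁻¹' Z) := e.symm.measurable hZm
    have key : (Measure.pi fun _ : Fin (n+1) => gaussianReal 0 1) Z
        = ((gaussianReal 0 1).prod (Measure.pi fun _ : Fin n => gaussianReal 0 1))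
            (e.symm ⁻¹' Z) := by
      rw [← mp.map_eq, MeasurableEquiv.map_apply]
      congr 1
      ext x
      simp
    rw [key, ← Measure.prod_swap, Measure.map_apply measurable_swap hTm,
      Measure.measure_prod_null (measurable_swap hTm)]
    have hae : ∀ᵐ y ∂(Measure.pi fun _ : Fin n => gaussianReal 0 1),
        MvPolynomial.eval y Q.leadingCoeff ≠ 0 := by
      rw [ae_iff]
      simpa using IH Q.leadingCoeff hlc
    filter_upwards [hae] with y hy
    simp only [Pi.zero_apply]
    have hq : Polynomial.map (MvPolynomial.eval y) Q ≠ 0 := by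
      intro h0
      apply hy
      have : (Polynomial.map (MvPolynomial.eval y) Q).coeff Q.natDegree = 0 := by
        rw [h0, Polynomial.coeff_zero]
      rwa [Polynomial.coeff_map] at this
    have hfin : Set.Finite {a : ℝ | Polynomial.eval a (Polynomial.map (MvPolynomial.eval y) Q) = 0} :=
      Polynomial.finite_setOf_isRoot hq
    refine le_antisymm ?_ zero_le
    refine le_trans (measure_mono ?_) (le_of_eq (gauss_finite_null hfin))
    intro a ha
    simp only [Set.mem_preimage, Set.mem_setOf_eq] at ha ⊢
    have h2 : MvPolynomial.eval (Fin.cons a y) P = 0 := by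
      have h3 : e.symm (a, y) ∈ Z := ha
      rwa [hsymm (a, y)] at h3
    rwa [MvPolynomial.eval_eq_eval_mv_eval'] at h2

lemma eval_sum_elim {σ τ : Type*} (f : σ → ℝ) (g' : τ → ℝ)
    (Q : MvPolynomial (σ ⊕ τ) ℝ) :
    MvPolynomial.eval (Sum.elim f g') Q
      = MvPolynomial.eval f (MvPolynomial.map (MvPolynomial.eval g')
          (MvPolynomial.sumToIter ℝ σ τ Q)) := by
  have h : (MvPolynomial.eval (Sum.elim f g'))
      = RingHom.comp (MvPolynomial.eval f)
          (RingHom.comp (MvPolynomial.map (MvPolynomial.eval g' : MvPolynomial τ ℝ →+* ℝ))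
            (MvPolynomial.sumToIter ℝ σ τ)) := by
    apply MvPolynomial.ringHom_ext
    · intro r; simp [MvPolynomial.sumToIter_C]
    · rintro (b | c) <;> simp [MvPolynomial.sumToIter_Xl, MvPolynomial.sumToIter_Xr]
  rw [h]; rfl

lemma sumToIter_ne_zero {σ τ : Type*} {Q : MvPolynomial (σ ⊕ τ) ℝ} (h : Q ≠ 0) :
    MvPolynomial.sumToIter ℝ σ τ Q ≠ 0 := by
  intro h0
  apply h
  have h1 := congrArg (MvPolynomial.iterToSum ℝ σ τ) h0
  rw [map_zero] at h1
  have h2 : MvPolynomial.iterToSum ℝ σ τ (MvPolynomial.sumToIter ℝ σ τ Q) = Q :=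
    by
      have hc : (MvPolynomial.iterToSum ℝ σ τ).comp (MvPolynomial.sumToIter ℝ σ τ)
          = RingHom.id _ := by
        apply MvPolynomial.ringHom_ext
        · intro r; simp [MvPolynomial.sumToIter_C, MvPolynomial.iterToSum_C_C]
        · rintro (b | c) <;> simp [MvPolynomial.sumToIter_Xl, MvPolynomial.sumToIter_Xr,
            MvPolynomial.iterToSum_X, MvPolynomial.iterToSum_C_X]
      exact RingHom.congr_fun hc Q
  rwa [h2] at h1

def consIdx (M K : ℕ) : Fin (M+1) × Fin K → (Fin K ⊕ Fin M × Fin K) :=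
  fun p => Fin.cases (Sum.inl p.2) (fun j => Sum.inr (j, p.2)) p.1

lemma consIdx_injective {M K : ℕ} : Function.Injective (consIdx M K) := by
  have h : Function.LeftInverse
      (Sum.elim (fun k => ((0 : Fin (M+1)), k)) (fun q : Fin M × Fin K => (q.1.succ, q.2)))
      (consIdx M K) := by
    rintro ⟨j, k⟩
    induction j using Fin.cases <;> simp [consIdx]
  exact h.injective

lemma measurableSet_ppset {N K : ℕ} (P : MvPolynomial (Fin N × Fin K) ℝ) :
    MeasurableSet {H : Fin N → Fin K → ℝ |
      MvPolynomial.eval (fun p : Fin N × Fin K => H p.1 p.2) P = 0} := by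
  have hc : Continuous fun H : Fin N → Fin K → ℝ => (fun p : Fin N × Fin K => H p.1 p.2) :=
    continuous_pi fun p => (continuous_apply p.2).comp (continuous_apply p.1)
  exact ((MvPolynomial.continuous_eval (p := P)).comp hc).measurable (measurableSet_singleton 0)

theorem pp (K : ℕ) : ∀ (N : ℕ) (P : MvPolynomial (Fin N × Fin K) ℝ), P ≠ 0 →
    (Measure.pi fun _ : Fin N => Measure.pi fun _ : Fin K => gaussianReal 0 1)
      {H : Fin N → Fin K → ℝ | MvPolynomial.eval (fun p : Fin N × Fin K => H p.1 p.2) P = 0}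
      = 0 := by
  intro N
  induction N with
  | zero =>
    intro P hP
    have hEmp : IsEmpty (Fin 0 × Fin K) := ⟨fun p => p.1.elim0⟩
    obtain ⟨a, rfl⟩ := MvPolynomial.C_surjective (Fin 0 × Fin K) P
    have ha : a ≠ 0 := fun h => hP (by rw [h, map_zero])
    have hset : {H : Fin 0 → Fin K → ℝ |
        MvPolynomial.eval (fun p : Fin 0 × Fin K => H p.1 p.2) (MvPolynomial.C a) = 0} = ∅ := by
      ext H; simp [ha]
    rw [hset]; exact measure_empty
  | succ N IH =>
    intro P hP
    set ν : Measure (Fin K → ℝ) := Measure.pi fun _ : Fin K => gaussianReal 0 1 with hνdef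
    have hR0 : MvPolynomial.rename (consIdx N K) P ≠ 0 := by
      intro h
      exact hP (MvPolynomial.rename_injective _ consIdx_injective (by rw [h, map_zero]))
    set R' : MvPolynomial (Fin K) (MvPolynomial (Fin N × Fin K) ℝ) :=
      MvPolynomial.sumToIter ℝ (Fin K) (Fin N × Fin K) (MvPolynomial.rename (consIdx N K) P)
      with hR'def
    have hR' : R' ≠ 0 := sumToIter_ne_zero hR0
    obtain ⟨m₀, hm₀⟩ := MvPolynomial.ne_zero_iff.mp hR'
    have hbridge : ∀ (h : Fin K → ℝ) (H' : Fin N → Fin K → ℝ),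
        MvPolynomial.eval (fun p : Fin (N+1) × Fin K => (Fin.cons h H' : Fin (N+1) → Fin K → ℝ) p.1 p.2) P
          = MvPolynomial.eval h (MvPolynomial.map
              (MvPolynomial.eval (fun q : Fin N × Fin K => H' q.1 q.2)) R') := by
      intro h H'
      have h1 : (fun p : Fin (N+1) × Fin K => (Fin.cons h H' : Fin (N+1) → Fin K → ℝ) p.1 p.2)
          = (Sum.elim h (fun q : Fin N × Fin K => H' q.1 q.2)) ∘ (consIdx N K) := by
        funext p
        obtain ⟨j, k⟩ := p
        induction j using Fin.cases <;> simp [consIdx]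
      rw [h1, ← MvPolynomial.eval_rename, eval_sum_elim]
    set Z : Set (Fin (N+1) → Fin K → ℝ) := {H | MvPolynomial.eval
        (fun p : Fin (N+1) × Fin K => H p.1 p.2) P = 0} with hZdef
    have hZm : MeasurableSet Z := measurableSet_ppset P
    have mp := measurePreserving_piFinSuccAbove
      (fun _ : Fin (N+1) => (ν : Measure (Fin K → ℝ))) 0
    set e := MeasurableEquiv.piFinSuccAbove (fun _ : Fin (N+1) => (Fin K → ℝ)) 0 with hedef
    have hsymm : ∀ p : (Fin K → ℝ) × (Fin N → Fin K → ℝ), e.symm p = Fin.cons p.1 p.2 := by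
      intro p
      simp [hedef, MeasurableEquiv.piFinSuccAbove, Fin.insertNth_zero', Fin.consEquiv]
    have hTm : MeasurableSet (e.symm ⁻¹' Z) := e.symm.measurable hZm
    have key : (Measure.pi fun _ : Fin (N+1) => (ν : Measure (Fin K → ℝ))) Z
        = (ν.prod (Measure.pi fun _ : Fin N => (ν : Measure (Fin K → ℝ)))) (e.symm ⁻¹' Z) := by
      rw [← mp.map_eq, MeasurableEquiv.map_apply]
      congr 1
      ext x
      simp
    rw [key, ← Measure.prod_swap, Measure.map_apply measurable_swap hTm,
      Measure.measure_prod_null (measurable_swap hTm)]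
    have hae : ∀ᵐ H' ∂(Measure.pi fun _ : Fin N => (ν : Measure (Fin K → ℝ))),
        MvPolynomial.eval (fun q : Fin N × Fin K => H' q.1 q.2) (MvPolynomial.coeff m₀ R') ≠ 0 := by
      rw [ae_iff]
      simpa using IH (MvPolynomial.coeff m₀ R') hm₀
    filter_upwards [hae] with H' hH'
    simp only [Pi.zero_apply]
    have hq : MvPolynomial.map (MvPolynomial.eval (fun q : Fin N × Fin K => H' q.1 q.2)) R' ≠ 0 := by
      intro h0
      apply hH'
      have hc := congrArg (MvPolynomial.coeff m₀) h0
      rwa [MvPolynomial.coeff_map, MvPolynomial.coeff_zero] at hc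
    have hzs := zs1 K _ hq
    refine le_antisymm ?_ zero_le
    refine le_trans (measure_mono ?_) (le_of_eq hzs)
    intro h ha
    simp only [Set.mem_preimage, Set.mem_setOf_eq] at ha ⊢
    have h2 : e.symm (h, H') ∈ Z := ha
    rw [hsymm (h, H')] at h2
    have h3 : MvPolynomial.eval
        (fun p : Fin (N+1) × Fin K => (Fin.cons h H' : Fin (N+1) → Fin K → ℝ) p.1 p.2) P = 0 := h2
    rwa [hbridge] at h3

lemma core (s : ℝ) (hs : 0 < s) (α : ℕ) (hα : 2 ≤ α) (hαe : Even α)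
    {D : ℕ} (b : Fin D → ℝ) (hb0 : ∀ i, b i ≠ 0)
    (hbne : ∀ i j, i ≠ j → b i ≠ b j ∧ b i ≠ - b j)
    (lam : Fin D → ℝ) (hlam : lam ≠ 0) :
    ∃ cc : ℝ, (∑ i, lam i * ((cc * b i) / (1 + ((cc * b i) / s) ^ α))) ≠ 0 := by
  by_contra hcon
  push_neg at hcon
  have hα0 : α ≠ 0 := by omega
  have hsα : (0:ℝ) < s ^ α := pow_pos hs α
  have hden : ∀ y : ℝ, 0 < 1 + (y / s) ^ α := by
    intro y
    have := hαe.pow_nonneg (y / s)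
    linarith
  have key : ∀ y : ℝ, (y / (1 + (y / s) ^ α)) * (s ^ α + y ^ α) = s ^ α * y := by
    intro y
    have hne : (1 + (y / s) ^ α) ≠ 0 := (hden y).ne'
    have h1 : s ^ α + y ^ α = s ^ α * (1 + (y / s) ^ α) := by
      rw [div_pow]
      field_simp
    rw [h1, mul_comm (s ^ α) (1 + (y / s) ^ α), ← mul_assoc, div_mul_cancel₀ _ hne, mul_comm]
  set p : Polynomial ℝ := ∑ i, Polynomial.C (lam i * b i * s ^ α) * Polynomial.X *
      ∏ k ∈ Finset.univ.erase i, (Polynomial.C (s ^ α) + (Polynomial.C (b k) * Polynomial.X) ^ α)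
    with hpdef
  have heval : ∀ c : ℝ, p.eval c
      = ∑ i, lam i * b i * s ^ α * c * ∏ k ∈ Finset.univ.erase i, (s ^ α + (b k * c) ^ α) := by
    intro c
    rw [hpdef]
    simp [Polynomial.eval_finset_sum, Polynomial.eval_prod]
  have hrel : ∀ c : ℝ, p.eval c
      = (∑ i, lam i * ((c * b i) / (1 + ((c * b i) / s) ^ α)))
          * ∏ k, (s ^ α + (b k * c) ^ α) := by
    intro c
    rw [heval c, Finset.sum_mul]
    refine Finset.sum_congr rfl ?_
    intro i _
    rw [← Finset.mul_prod_erase _ _ (Finset.mem_univ i)]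
    have hkey := key (c * b i)
    have h2 : lam i * (c * b i / (1 + (c * b i / s) ^ α)) *
        ((s ^ α + (b i * c) ^ α) * ∏ k ∈ Finset.univ.erase i, (s ^ α + (b k * c) ^ α))
        = lam i * ((c * b i / (1 + (c * b i / s) ^ α)) * (s ^ α + (c * b i) ^ α)) *
          ∏ k ∈ Finset.univ.erase i, (s ^ α + (b k * c) ^ α) := by
      rw [mul_comm (b i) c]; ring
    rw [h2, hkey]
    ring
  have hp0 : p = 0 := by
    apply Polynomial.funext
    intro c
    rw [hrel c, hcon c, zero_mul, Polynomial.eval_zero]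
  obtain ⟨i₀, hlam0'⟩ := Function.ne_iff.mp hlam
  have hlam0 : lam i₀ ≠ 0 := hlam0'
  set ω : ℂ := Complex.exp (Real.pi * Complex.I / α) with hωdef
  clear_value ω
  have hω0 : ω ≠ 0 := by rw [hωdef]; exact Complex.exp_ne_zero _
  have hαC : (α : ℂ) ≠ 0 := Nat.cast_ne_zero.mpr hα0
  have hωα : ω ^ α = -1 := by
    rw [hωdef, ← Complex.exp_nat_mul]
    have h3 : (α : ℂ) * (Real.pi * Complex.I / α) = Real.pi * Complex.I := by
      rw [mul_div_assoc']
      exact mul_div_cancel_left₀ _ hαC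
    rw [h3, Complex.exp_pi_mul_I]
  have hsC : (s : ℂ) ≠ 0 := Complex.ofReal_ne_zero.mpr hs.ne'
  have hbi₀ : ((b i₀ : ℝ) : ℂ) ≠ 0 := Complex.ofReal_ne_zero.mpr (hb0 i₀)
  set z₀ : ℂ := (s * ω) / (b i₀) with hz₀def
  clear_value z₀
  have hz₀ : z₀ ≠ 0 := by rw [hz₀def]; exact div_ne_zero (mul_ne_zero hsC hω0) hbi₀
  have hbz₀ : ((b i₀ : ℝ) : ℂ) * z₀ = (s : ℂ) * ω := by
    rw [hz₀def]
    field_simp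
  have hsum0 : ∑ i, ((lam i : ℝ) : ℂ) * (b i : ℝ) * (s : ℂ) ^ α * z₀ *
      ∏ k ∈ Finset.univ.erase i, ((s : ℂ) ^ α + (((b k : ℝ) : ℂ) * z₀) ^ α) = 0 := by
    have h0 : (Polynomial.aeval z₀ : Polynomial ℝ →ₐ[ℝ] ℂ) p = 0 := by
      rw [hp0]; simp
    rw [hpdef, map_sum] at h0
    rw [← h0]
    refine Finset.sum_congr rfl ?_
    intro i _
    rw [map_mul, map_mul, Polynomial.aeval_C, Polynomial.aeval_X, map_prod]
    have hprod : ∀ k ∈ Finset.univ.erase i,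
        (Polynomial.aeval z₀ : Polynomial ℝ →ₐ[ℝ] ℂ)
            (Polynomial.C (s ^ α) + (Polynomial.C (b k) * Polynomial.X) ^ α)
          = (s : ℂ) ^ α + (((b k : ℝ) : ℂ) * z₀) ^ α := by
      intro k _
      simp only [map_add, map_pow, map_mul, Polynomial.aeval_C, Polynomial.aeval_X,
        Complex.coe_algebraMap]
      try ring
    rw [Finset.prod_congr rfl hprod,
      show (algebraMap ℝ ℂ) (lam i * b i * s ^ α) = ((lam i : ℝ) : ℂ) * (b i : ℝ) * (s:ℂ)^α by norm_cast]
  have hterm0 : ∀ i ∈ Finset.univ, i ≠ i₀ →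
      ((lam i : ℝ) : ℂ) * (b i : ℝ) * (s : ℂ) ^ α * z₀ *
        ∏ k ∈ Finset.univ.erase i, ((s : ℂ) ^ α + (((b k : ℝ) : ℂ) * z₀) ^ α) = 0 := by
    intro i _ hi
    have hmem : i₀ ∈ Finset.univ.erase i := Finset.mem_erase.mpr ⟨Ne.symm hi, Finset.mem_univ _⟩
    have hfac : (s : ℂ) ^ α + (((b i₀ : ℝ) : ℂ) * z₀) ^ α = 0 := by
      rw [hbz₀, mul_pow, hωα]
      ring
    rw [Finset.prod_eq_zero hmem hfac, mul_zero]
  have hmain := Finset.sum_eq_single_of_mem i₀ (Finset.mem_univ i₀) hterm0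
  rw [hsum0] at hmain
  have hfacne : ∀ k ∈ Finset.univ.erase i₀, (s : ℂ) ^ α + (((b k : ℝ) : ℂ) * z₀) ^ α ≠ 0 := by
    intro k hk
    have hki₀ : k ≠ i₀ := (Finset.mem_erase.mp hk).1
    have hbkz : ((b k : ℝ) : ℂ) * z₀ = (s : ℂ) * ω * (((b k / b i₀ : ℝ)) : ℂ) := by
      rw [hz₀def]
      push_cast
      field_simp
    rw [hbkz]
    intro hzero
    have hsα' : ((s:ℂ)) ^ α ≠ 0 := pow_ne_zero _ hsC
    have h2 : ((s:ℂ) * ω * (((b k / b i₀ : ℝ)) : ℂ)) ^ α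
        = -((s:ℂ)) ^ α * (((b k / b i₀ : ℝ)) : ℂ) ^ α := by
      rw [mul_pow, mul_pow, hωα]
      ring
    rw [h2] at hzero
    have h3 : (s:ℂ) ^ α * (1 - (((b k / b i₀ : ℝ)) : ℂ) ^ α) = 0 := by
      linear_combination hzero
    have hr : (((b k / b i₀ : ℝ)) : ℂ) ^ α = 1 := by
      rcases mul_eq_zero.mp h3 with h | h
      · exact absurd h hsα'
      · linear_combination -h
    have hrR : (b k / b i₀) ^ α = 1 := by
      rw [← Complex.ofReal_pow] at hr
      exact_mod_cast hr
    rcases (pow_eq_one_iff_of_ne_zero hα0).mp hrR with h | h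
    · rw [div_eq_iff (hb0 i₀)] at h
      exact (hbne k i₀ hki₀).1 (by linarith)
    · have h1 := h.1
      rw [div_eq_iff (hb0 i₀)] at h1
      exact (hbne k i₀ hki₀).2 (by linarith)
  have hprodne : ∏ k ∈ Finset.univ.erase i₀, ((s : ℂ) ^ α + (((b k : ℝ) : ℂ) * z₀) ^ α) ≠ 0 :=
    Finset.prod_ne_zero_iff.mpr hfacne
  have hlamC : ((lam i₀ : ℝ) : ℂ) ≠ 0 := Complex.ofReal_ne_zero.mpr hlam0
  have hfinal : ((lam i₀ : ℝ) : ℂ) * (b i₀ : ℝ) * (s : ℂ) ^ α * z₀ *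
      ∏ k ∈ Finset.univ.erase i₀, ((s : ℂ) ^ α + (((b k : ℝ) : ℂ) * z₀) ^ α) ≠ 0 :=
    mul_ne_zero (mul_ne_zero (mul_ne_zero (mul_ne_zero hlamC hbi₀)
      (pow_ne_zero _ hsC)) hz₀) hprodne
  exact hfinal hmain.symm

section Lin

variable {m D : ℕ}

noncomputable def Lf (v : Fin m → ℝ) : MvPolynomial (Fin m) ℝ :=
  ∑ k, MvPolynomial.C (v k) * MvPolynomial.X k

lemma Lf_eval (v : Fin m → ℝ) (e : Fin m → ℝ) :
    MvPolynomial.eval e (Lf v) = ∑ k, e k * v k := by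
  simp [Lf, mul_comm]

lemma Lf_ne_zero {v : Fin m → ℝ} (hv : v ≠ 0) : Lf v ≠ 0 := by
  intro h
  apply hv
  funext k
  have hc := congrArg (MvPolynomial.coeff (Finsupp.single k 1)) h
  rw [Lf, MvPolynomial.coeff_sum, MvPolynomial.coeff_zero] at hc
  simp only [MvPolynomial.coeff_C_mul, MvPolynomial.coeff_X'] at hc
  have hrw : ∀ j : Fin m, (if Finsupp.single j 1 = Finsupp.single k (1:ℕ) then (1:ℝ) else 0)
      = if j = k then 1 else 0 := by
    intro j
    by_cases hj : j = k
    · subst hj; simp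
    · rw [if_neg hj, if_neg]
      intro hEq
      exact hj (Finsupp.single_left_injective one_ne_zero hEq)
  simp only [hrw, mul_ite, mul_one, mul_zero, Finset.sum_ite_eq', Finset.mem_univ,
    if_true] at hc
  simpa using hc

lemma lin_exists (xt : Fin D → Fin m → ℝ) (hne : ∀ i, xt i ≠ 0)
    (hsub : ∀ i j, i ≠ j → xt i - xt j ≠ 0) (hadd : ∀ i j, i ≠ j → xt i + xt j ≠ 0) :
    ∃ e : Fin m → ℝ, (∀ i, (∑ k, e k * xt i k) ≠ 0) ∧
      (∀ i j, i ≠ j → (∑ k, e k * xt i k) ≠ (∑ k, e k * xt j k) ∧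
        (∑ k, e k * xt i k) ≠ -(∑ k, e k * xt j k)) := by
  classical
  set p : MvPolynomial (Fin m) ℝ := (∏ i, Lf (xt i)) *
      ∏ q ∈ Finset.univ.offDiag, (Lf (xt q.1 - xt q.2) * Lf (xt q.1 + xt q.2)) with hpdef
  have hp : p ≠ 0 := by
    apply mul_ne_zero
    · exact Finset.prod_ne_zero_iff.mpr fun i _ => Lf_ne_zero (hne i)
    · refine Finset.prod_ne_zero_iff.mpr fun q hq => ?_
      have hq' := (Finset.mem_offDiag.mp hq).2.2
      exact mul_ne_zero (Lf_ne_zero (hsub _ _ hq')) (Lf_ne_zero (hadd _ _ hq'))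
  have hex : ∃ e : Fin m → ℝ, MvPolynomial.eval e p ≠ 0 := by
    by_contra hcon
    push_neg at hcon
    exact hp (MvPolynomial.funext fun e => by rw [hcon e, map_zero])
  obtain ⟨e, he⟩ := hex
  rw [hpdef, map_mul, map_prod, map_prod] at he
  have h1 := left_ne_zero_of_mul he
  have h2 := right_ne_zero_of_mul he
  refine ⟨e, ?_, ?_⟩
  · intro i
    have := Finset.prod_ne_zero_iff.mp h1 i (Finset.mem_univ i)
    rwa [Lf_eval] at this
  · intro i j hij
    have hmem : (i, j) ∈ Finset.univ.offDiag := Finset.mem_offDiag.mpr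
      ⟨Finset.mem_univ _, Finset.mem_univ _, hij⟩
    have := Finset.prod_ne_zero_iff.mp h2 (i, j) hmem
    rw [map_mul] at this
    have ha := left_ne_zero_of_mul this
    have hb := right_ne_zero_of_mul this
    rw [Lf_eval] at ha hb
    constructor
    · intro hEq
      apply ha
      simp only [Pi.sub_apply, mul_sub, Finset.sum_sub_distrib]
      rw [hEq]; ring
    · intro hEq
      apply hb
      simp only [Pi.add_apply, mul_add, Finset.sum_add_distrib]
      rw [hEq]; ring
end Lin

section Span

lemma span_det (s : ℝ) (hs : 0 < s) (α : ℕ) (hα : 2 ≤ α) (hαe : Even α)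
    {D : ℕ} (b : Fin D → ℝ) (hb0 : ∀ i, b i ≠ 0)
    (hbne : ∀ i j, i ≠ j → b i ≠ b j ∧ b i ≠ - b j) :
    ∃ c : Fin D → ℝ,
      (Matrix.of fun i j : Fin D => (c j * b i) / (1 + ((c j * b i) / s) ^ α)).det ≠ 0 := by
  classical
  set v : ℝ → (Fin D → ℝ) := fun t i => (t * b i) / (1 + ((t * b i) / s) ^ α) with hvdef
  have hspan : Submodule.span ℝ (Set.range v) = ⊤ := by
    by_contra hW
    obtain ⟨f, hf0, hker⟩ := Submodule.exists_dual_map_eq_bot_of_lt_top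
      (lt_top_iff_ne_top.mpr hW) inferInstance
    set lam : Fin D → ℝ := fun i => f (Pi.basisFun ℝ (Fin D) i) with hlamdef
    have hlam : lam ≠ 0 := by
      intro h
      apply hf0
      apply (Pi.basisFun ℝ (Fin D)).ext
      intro i
      have := congrFun h i
      simpa [hlamdef] using this
    have hexp : ∀ u : Fin D → ℝ, f u = ∑ i, u i * lam i := by
      intro u
      have hu : u = ∑ i, u i • (Pi.basisFun ℝ (Fin D)) i := by
        have := (Pi.basisFun ℝ (Fin D)).sum_repr u
        simpa [Pi.basisFun_repr] using this.symm
      conv_lhs => rw [hu]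
      rw [map_sum]
      simp [hlamdef, smul_eq_mul]
    obtain ⟨t, ht⟩ := core s hs α hα hαe b hb0 hbne lam hlam
    apply ht
    have hvmem : v t ∈ Submodule.span ℝ (Set.range v) := Submodule.subset_span ⟨t, rfl⟩
    have hf : f (v t) = 0 := by
      have hmem := Submodule.mem_map_of_mem (f := f) hvmem
      rw [hker] at hmem
      simpa using hmem
    rw [hexp] at hf
    rw [← hf]
    refine Finset.sum_congr rfl fun i _ => ?_
    rw [hvdef]
    ring
  obtain ⟨tset, htsub, htspan, htind⟩ := exists_linearIndependent ℝ (Set.range v)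
  rw [hspan] at htspan
  have hsp : ⊤ ≤ Submodule.span ℝ (Set.range (Subtype.val : tset → (Fin D → ℝ))) := by
    rw [Subtype.range_coe, htspan]
  set hbasis : Module.Basis tset ℝ (Fin D → ℝ) := Module.Basis.mk htind hsp with hbasisdef
  have htfin : tset.Finite := htind.setFinite
  haveI := htfin.fintype
  have hcard : Fintype.card tset = D := by
    have h1 := Module.finrank_eq_card_basis hbasis
    rw [Module.finrank_fintype_fun_eq_card] at h1
    simp only [Fintype.card_fin] at h1
    omega
  have eD : Fin D ≃ tset := (Fintype.equivFinOfCardEq hcard).symm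
  set bD : Module.Basis (Fin D) ℝ (Fin D → ℝ) := hbasis.reindex eD.symm with hbDdef
  have hbD : ∀ j, (bD j : Fin D → ℝ) ∈ Set.range v := by
    intro j
    rw [hbDdef]
    rw [Module.Basis.reindex_apply]
    simp only [Equiv.symm_symm]
    rw [hbasisdef, Module.Basis.mk_apply]
    exact htsub (eD j).2
  choose c hc using fun j => hbD j
  refine ⟨c, ?_⟩
  have hMeq : (Matrix.of fun i j : Fin D => (c j * b i) / (1 + ((c j * b i) / s) ^ α))
      = (Pi.basisFun ℝ (Fin D)).toMatrix (fun j => (bD j : Fin D → ℝ)) := by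
    ext i j
    rw [Matrix.of_apply, Module.Basis.toMatrix_apply, Pi.basisFun_repr, ← hc j, hvdef]
  rw [hMeq]
  haveI := Module.Basis.invertibleToMatrix (Pi.basisFun ℝ (Fin D)) bD
  exact (Matrix.isUnit_det_of_invertible _).ne_zero

end Span

lemma rapp_key (s : ℝ) (hs : 0 < s) (α : ℕ) (hαe : Even α) :
    ∀ y : ℝ, (y / (1 + (y / s) ^ α)) * (s ^ α + y ^ α) = s ^ α * y := by
  intro y
  have hden : 0 < 1 + (y / s) ^ α := by
    have := hαe.pow_nonneg (y / s)
    linarith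
  have hne : (1 + (y / s) ^ α) ≠ 0 := hden.ne'
  have h1 : s ^ α + y ^ α = s ^ α * (1 + (y / s) ^ α) := by
    rw [div_pow]
    field_simp
  rw [h1, mul_comm (s ^ α) (1 + (y / s) ^ α), ← mul_assoc, div_mul_cancel₀ _ hne, mul_comm]

/-- Universal approximation for the XL-MIMO-ELM: for the Rapp activation (`s > 0`,
even `α ≥ 2`), a data set of `D` pairwise distinct observations `x⁽ⁱ⁾ ∈ ℝ^d`
(`d ≥ 1`, augmented by a trailing `1`) with targets `t⁽ⁱ⁾ ∈ ℝ`, and any `ε > 0`,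
there exists a number of hidden nodes `N_r ≤ D` such that for almost every random
matrix `H ∈ ℝ^{N_r×(d+1)}` with i.i.d. standard Gaussian entries there is a weight
vector `w ∈ ℝ^{N_r}` with `‖G w − t‖ < ε` in the Euclidean norm, where
`G_{i,j} = g(⟨H_{j,·}, x̃⁽ⁱ⁾⟩)`. -/
theorem elm_universal_approximation (s : ℝ) (hs : 0 < s) (α : ℕ) (hα : 2 ≤ α)
    (hαe : Even α) (d D : ℕ) (hd : 1 ≤ d)
    (x : Fin D → Fin d → ℝ) (hx : Function.Injective x) (t : Fin D → ℝ) :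
    ∀ ε : ℝ, 0 < ε → ∃ Nr : ℕ, Nr ≤ D ∧
      ∀ᵐ H : Fin Nr → Fin (d + 1) → ℝ
        ∂(Measure.pi fun _ : Fin Nr => Measure.pi fun _ : Fin (d + 1) => gaussianReal 0 1),
        ∃ w : Fin Nr → ℝ,
          Real.sqrt (∑ i, (∑ j, ((∑ k, H j k * (Fin.snoc (x i) 1 : Fin (d + 1) → ℝ) k)
              / (1 + ((∑ k, H j k * (Fin.snoc (x i) 1 : Fin (d + 1) → ℝ) k) / s) ^ α)) * w j - t i) ^ 2)
            < ε := by
  classical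
  intro ε hε
  by_cases hD : D = 0
  · subst hD
    refine ⟨0, le_refl _, ?_⟩
    filter_upwards with H
    refine ⟨fun _ => 0, ?_⟩
    simpa using hε
  · refine ⟨D, le_refl _, ?_⟩
    have hsα : (0:ℝ) < s ^ α := pow_pos hs α
    set xt : Fin D → Fin (d+1) → ℝ := fun i => Fin.snoc (x i) 1 with hxtdef
    have hxt_inj : Function.Injective xt := by
      intro i j h
      apply hx
      funext k
      have := congrFun h (Fin.castSucc k)
      simpa [hxtdef, Fin.snoc_castSucc] using this
    have hne : ∀ i, xt i ≠ 0 := by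
      intro i h
      have := congrFun h (Fin.last d)
      simp [hxtdef, Fin.snoc_last] at this
    have hsub : ∀ i j, i ≠ j → xt i - xt j ≠ 0 := by
      intro i j hij h
      exact hij (hxt_inj (sub_eq_zero.mp h))
    have hadd : ∀ i j, i ≠ j → xt i + xt j ≠ 0 := by
      intro i j _ h
      have := congrFun h (Fin.last d)
      simp [hxtdef, Fin.snoc_last] at this
    obtain ⟨e, hB0, hBne⟩ := lin_exists xt hne hsub hadd
    set b : Fin D → ℝ := fun i => ∑ k, e k * xt i k with hbdef
    obtain ⟨c, hcdet⟩ := span_det s hs α hα hαe b hB0 hBne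
    -- the global polynomial
    set Y : Fin D → Fin D → MvPolynomial (Fin D × Fin (d+1)) ℝ :=
      fun i j => ∑ k, MvPolynomial.C (xt i k) * MvPolynomial.X (j, k) with hYdef
    set A : Matrix (Fin D) (Fin D) (MvPolynomial (Fin D × Fin (d+1)) ℝ) :=
      Matrix.of fun i j => MvPolynomial.C (s ^ α) * Y i j *
        ∏ i' ∈ Finset.univ.erase i, (MvPolynomial.C (s ^ α) + (Y i' j) ^ α) with hAdef
    -- evaluation facts
    set yv : (Fin D → Fin (d+1) → ℝ) → Fin D → Fin D → ℝ :=
      fun H i j => ∑ k, H j k * xt i k with hyvdef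
    have heY : ∀ H i j, MvPolynomial.eval (fun p : Fin D × Fin (d+1) => H p.1 p.2) (Y i j)
        = yv H i j := by
      intro H i j
      rw [hYdef, hyvdef]
      simp only [map_sum, map_mul, MvPolynomial.eval_C, MvPolynomial.eval_X]
      try exact Finset.sum_congr rfl fun k _ => mul_comm _ _
    set Gm : (Fin D → Fin (d+1) → ℝ) → Matrix (Fin D) (Fin D) ℝ :=
      fun H => Matrix.of fun i j => (yv H i j) / (1 + ((yv H i j) / s) ^ α) with hGmdef
    have hdpos : ∀ (H) (i j : Fin D), 0 < s ^ α + (yv H i j) ^ α := by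
      intro H i j
      have := hαe.pow_nonneg (yv H i j)
      linarith
    have hPeval : ∀ H : Fin D → Fin (d+1) → ℝ,
        MvPolynomial.eval (fun p : Fin D × Fin (d+1) => H p.1 p.2) A.det
          = (∏ j, ∏ i', (s ^ α + (yv H i' j) ^ α)) * (Gm H).det := by
      intro H
      rw [RingHom.map_det]
      have hmap : (A.map (MvPolynomial.eval (fun p : Fin D × Fin (d+1) => H p.1 p.2)))
          = Matrix.of fun i j => (∏ i', (s ^ α + (yv H i' j) ^ α)) * (Gm H) i j := by
        ext i j
        rw [Matrix.map_apply, hAdef]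
        simp only [Matrix.of_apply]
        rw [map_mul, map_mul, MvPolynomial.eval_C, heY, map_prod]
        have hfac : ∀ i' ∈ Finset.univ.erase i,
            MvPolynomial.eval (fun p : Fin D × Fin (d+1) => H p.1 p.2)
              (MvPolynomial.C (s ^ α) + (Y i' j) ^ α) = s ^ α + (yv H i' j) ^ α := by
          intro i' _
          rw [map_add, MvPolynomial.eval_C, map_pow, heY]
        rw [Finset.prod_congr rfl hfac]
        have hkey := rapp_key s hs α hαe (yv H i j)
        rw [hGmdef]
        simp only [Matrix.of_apply]
        rw [← Finset.mul_prod_erase _ (fun i' => s ^ α + (yv H i' j) ^ α) (Finset.mem_univ i),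
          ← hkey]
        ring
      rw [RingHom.mapMatrix_apply, hmap]
      rw [Matrix.det_mul_row (fun j => ∏ i', (s ^ α + yv H i' j ^ α)) (Gm H)]
    have hP0 : A.det ≠ 0 := by
      intro h0
      apply hcdet
      set H₀ : Fin D → Fin (d+1) → ℝ := fun j k => c j * e k with hH₀def
      have hy₀ : ∀ i j, yv H₀ i j = c j * b i := by
        intro i j
        rw [hyvdef, hbdef, hH₀def]
        simp only []
        rw [Finset.mul_sum]
        refine Finset.sum_congr rfl fun k _ => by ring
      have heval0 := hPeval H₀
      rw [h0, map_zero] at heval0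
      have hprodpos : (0:ℝ) < ∏ j, ∏ i', (s ^ α + (yv H₀ i' j) ^ α) :=
        Finset.prod_pos fun j _ => Finset.prod_pos fun i' _ => hdpos H₀ i' j
      have hdet0 : (Gm H₀).det = 0 := by
        rcases mul_eq_zero.mp heval0.symm with h | h
        · exact absurd h hprodpos.ne'
        · exact h
      have hGm0 : Gm H₀ = Matrix.of fun i j : Fin D => (c j * b i) / (1 + ((c j * b i) / s) ^ α) := by
        ext i j
        rw [hGmdef]
        simp only [Matrix.of_apply]
        rw [hy₀]
      rwa [hGm0] at hdet0
    have hae : ∀ᵐ H : Fin D → Fin (d+1) → ℝ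
        ∂(Measure.pi fun _ : Fin D => Measure.pi fun _ : Fin (d+1) => gaussianReal 0 1),
        MvPolynomial.eval (fun p : Fin D × Fin (d+1) => H p.1 p.2) A.det ≠ 0 := by
      rw [ae_iff]
      simpa using pp (d+1) D A.det hP0
    filter_upwards [hae] with H hH
    have hdet : (Gm H).det ≠ 0 := by
      intro h0
      apply hH
      rw [hPeval H, h0, mul_zero]
    set w : Fin D → ℝ := (Gm H)⁻¹.mulVec t with hwdef
    have hGw : (Gm H).mulVec w = t := by
      rw [hwdef, Matrix.mulVec_mulVec, Matrix.mul_nonsing_inv _ (isUnit_iff_ne_zero.mpr hdet),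
        Matrix.one_mulVec]
    have hsolve : ∀ i, ∑ j, (Gm H) i j * w j = t i := by
      intro i
      have := congrFun hGw i
      simpa [Matrix.mulVec, dotProduct] using this
    refine ⟨w, ?_⟩
    have hzero : (∑ i, (∑ j, ((∑ k, H j k * xt i k)
        / (1 + ((∑ k, H j k * xt i k) / s) ^ α)) * w j - t i) ^ 2) = 0 := by
      refine Finset.sum_eq_zero fun i _ => ?_
      have h1 : (∑ j, ((∑ k, H j k * xt i k)
          / (1 + ((∑ k, H j k * xt i k) / s) ^ α)) * w j) = t i := by
        rw [← hsolve i]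
        refine Finset.sum_congr rfl fun j _ => ?_
        congr 1
      rw [h1, sub_self]
      exact zero_pow two_ne_zero
    rw [hzero, Real.sqrt_zero]
    exact hε
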